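/- Let d ≥ 2 and let P ⊆ ℝ^d be a d-dimensional centrally-symmetric lattice polytope with P°_ℤ = {0} and |P_ℤ| = 3^d. Then for every k with 1 ≤ k ≤ d−1 there exists a proper face F of P with dim(F) ≥ k such that the relative interior of F contains a lattice point. In particular (k = d−1), P has a facet whose relative interior contains a lattice point. -/

import Mathlib

open Set

noncomputable section

/-- Coordinatewise cast of an integer vector into `ℝ^d`. -/
def ic {d : ℕ} (v : Fin d → ℤ) : Fin d → ℝ := fun i => (v i : ℝ)

/-- `P_ℤ`: the set of lattice points of `ℤ^d` lying in `P`. -/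
def latticePts {d : ℕ} (P : Set (Fin d → ℝ)) : Set (Fin d → ℤ) := {x | ic x ∈ P}

/-- `P°_ℤ`: the set of lattice points of `ℤ^d` lying in the relative interior of `P`. -/
def relintLatticePts {d : ℕ} (P : Set (Fin d → ℝ)) : Set (Fin d → ℤ) :=
  {x | ic x ∈ intrinsicInterior ℝ P}

/-- `P` is a lattice polytope: the convex hull of finitely many points of `ℤ^d`. -/
def IsLatticePolytope {d : ℕ} (P : Set (Fin d → ℝ)) : Prop :=
  ∃ V : Finset (Fin d → ℤ), P = convexHull ℝ (ic '' ↑V)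

/-- `F` is a face of the convex set `P`: a convex extreme subset of `P`. -/
def IsFaceOf {d : ℕ} (P F : Set (Fin d → ℝ)) : Prop :=
  IsExtreme ℝ P F ∧ Convex ℝ F

set_option linter.unusedTactic false
set_option linter.unreachableTactic false
set_option linter.unusedVariables false
set_option maxHeartbeats 1000000

section General
variable {E : Type*} [NormedAddCommGroup E] [NormedSpace ℝ E]

/-- The minimal face of a convex set `P` at a point `m`. -/
def mface (P : Set E) (m : E) : Set E :=
  {y ∈ P | ∃ z ∈ P, m ∈ openSegment ℝ y z}

theorem mface_subset (P : Set E) (m : E) : mface P m ⊆ P := fun _ h => h.1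

theorem mem_mface_self {P : Set E} {m : E} (hm : m ∈ P) : m ∈ mface P m :=
  ⟨hm, m, hm, by rw [openSegment_same]; exact rfl⟩

/-- Key step: if `m ∈ openSegment c q` with `q ∈ P` and `c = s•a + s'•b` a proper convex
combination of points of `P`, then `a ∈ mface P m`. -/
theorem mface_aux {P : Set E} (hP : Convex ℝ P) {m a b c q : E} (haP : a ∈ P) (hbP : b ∈ P)
    (hq : q ∈ P) {t t' s s' : ℝ} (ht : 0 < t) (ht' : 0 < t') (htt' : t + t' = 1)
    (hs : 0 < s) (hs' : 0 ≤ s') (hss' : s + s' = 1)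
    (hmeq : t • c + t' • q = m) (hceq : s • a + s' • b = c) : a ∈ mface P m := by
  have hts : t * s < 1 := by nlinarith
  have hts0 : 0 < t * s := by positivity
  have hpos : (0:ℝ) < 1 - t * s := by linarith
  set r : E := ((t * s') / (1 - t * s)) • b + (t' / (1 - t * s)) • q with hr
  have hrP : r ∈ P := by
    refine hP hbP hq (by positivity) (by positivity) ?_
    field_simp
    nlinarith
  refine ⟨haP, r, hrP, ⟨t * s, 1 - t * s, hts0, hpos, by ring, ?_⟩⟩
  rw [hr, ← hmeq, ← hceq]
  match_scalars <;> field_simp <;> ring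
theorem mface_isExtreme {P : Set E} (hP : Convex ℝ P) (m : E) : IsExtreme ℝ P (mface P m) := by
  refine ⟨mface_subset P m, ?_⟩
  rintro a ha b hb c ⟨hcP, q, hq, hmseg⟩ hcseg
  obtain ⟨t, t', ht, ht', htt', hteq⟩ := hmseg
  obtain ⟨s, s', hs, hs', hss', hseq⟩ := hcseg
  exact mface_aux hP ha hb hq ht ht' htt' hs (le_of_lt hs') hss' hteq hseq


theorem mface_convex {P : Set E} (hP : Convex ℝ P) (m : E) : Convex ℝ (mface P m) := by
  rintro a ⟨haP, p, hp, ta, ta', hta, hta', htaa, haeq⟩ b ⟨hbP, q, hq, tb, tb', htb, htb', htbb, hbeq⟩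
    u v hu hv huv
  rcases eq_or_lt_of_le hu with rfl0 | hu'
  · simp only [← rfl0, zero_smul, zero_add]
    have : v = 1 := by linarith
    subst this; rw [one_smul]; exact ⟨hbP, q, hq, tb, tb', htb, htb', htbb, hbeq⟩
  rcases eq_or_lt_of_le hv with rfl0 | hv'
  · simp only [← rfl0, zero_smul, add_zero]
    have : u = 1 := by linarith
    subst this; rw [one_smul]; exact ⟨haP, p, hp, ta, ta', hta, hta', htaa, haeq⟩
  -- now 0 < u, 0 < v
  have hden : 0 < ta * v + tb * u := by positivity
  have key : tb*u*ta' + ta*v*tb' = (ta*v + tb*u) - ta*tb := by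
    linear_combination (tb*u)*htaa + (ta*v)*htbb + (-(ta*tb))*huv
  set θ : ℝ := tb * u / (ta * v + tb * u) with hθ
  have hθ0 : 0 < θ := by positivity
  have hθ1 : θ < 1 := by
    rw [hθ, div_lt_one hden]; nlinarith [mul_pos (mul_pos hta hv') htb]
  set lam : ℝ := ta * tb / (ta * v + tb * u) with hlam
  have hlam0 : 0 < lam := by positivity
  have hlam1 : lam < 1 := by
    rw [hlam, div_lt_one hden]
    have h1 := mul_pos (mul_pos hta hv') htb'
    have h2 := mul_pos (mul_pos htb hu') hta'
    linarith [key]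
  have h1lam : (0:ℝ) < 1 - lam := by linarith
  set rr : E := ((θ * ta') / (1 - lam)) • p + (((1-θ) * tb') / (1 - lam)) • q with hrr
  have hθ' : 1 - θ = ta*v/(ta * v + tb * u) := by
    rw [hθ]; field_simp; ring
  have hcoef : θ * ta' + (1-θ) * tb' = 1 - lam := by
    rw [hθ', hθ, hlam]; field_simp; linear_combination key
  have hrrP : rr ∈ P := by
    refine hP hp hq (by positivity) ?_ ?_
    · rw [hθ']; positivity
    · rw [← add_div, hcoef, div_self (ne_of_gt h1lam)]
  refine ⟨hP haP hbP hu hv huv, rr, hrrP, lam, 1 - lam, hlam0, h1lam, by ring, ?_⟩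
  -- goal : lam • (u • a + v • b) + (1 - lam) • rr = m
  have hma : θ • (ta • a + ta' • p) + (1-θ) • (tb • b + tb' • q) = m := by
    rw [haeq, hbeq]; module
  rw [hrr, ← hma]
  have e1 : lam * u = θ * ta := by rw [hlam, hθ]; field_simp
  have e2 : lam * v = (1-θ) * tb := by
    rw [hθ', hlam]; field_simp
  match_scalars
  · field_simp at e1 ⊢; linarith [e1]
  · field_simp at e2 ⊢; linarith [e2]
  · field_simp
  · field_simp

end General

section General2
variable {E : Type*} [NormedAddCommGroup E] [NormedSpace ℝ E]

/-- Characterization of membership in the intrinsic interior via ambient open sets. -/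
theorem mem_intrinsicInterior_iff' {s : Set E} {x : E} (hx : x ∈ affineSpan ℝ s) :
    x ∈ intrinsicInterior ℝ s ↔
      ∃ U : Set E, IsOpen U ∧ x ∈ U ∧ U ∩ (affineSpan ℝ s : Set E) ⊆ s := by
  constructor
  · rintro ⟨y, hy, rfl⟩
    rw [mem_interior_iff_mem_nhds, nhds_subtype_eq_comap, Filter.mem_comap] at hy
    obtain ⟨t, ht, hts⟩ := hy
    refine ⟨interior t, isOpen_interior, mem_interior_iff_mem_nhds.2 ht, ?_⟩
    rintro v ⟨hv1, hv2⟩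
    have hvt : Subtype.val (⟨v, hv2⟩ : affineSpan ℝ s) ∈ t := interior_subset hv1
    exact hts hvt
  · rintro ⟨U, hU, hxU, hUs⟩
    refine ⟨⟨x, hx⟩, ?_, rfl⟩
    rw [mem_interior_iff_mem_nhds, nhds_subtype_eq_comap, Filter.mem_comap]
    exact ⟨U, hU.mem_nhds hxU, fun w hw => hUs ⟨hw, w.2⟩⟩

theorem intrinsicInterior_subset_interior_of_span_top {s : Set E}
    (h : affineSpan ℝ s = ⊤) {x : E} (hx : x ∈ intrinsicInterior ℝ s) : x ∈ interior s := by
  have hx' : x ∈ affineSpan ℝ s := h ▸ AffineSubspace.mem_top ℝ E x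
  obtain ⟨U, hU, hxU, hUs⟩ := (mem_intrinsicInterior_iff' hx').1 hx
  refine mem_interior.2 ⟨U, fun v hv => hUs ⟨hv, ?_⟩, hU, hxU⟩
  rw [h]; exact AffineSubspace.mem_top ℝ E v

/-- If `p` is in the intrinsic interior of a convex set, `r ∈ s`, and `m` lies strictly
between them, then `m` is in the intrinsic interior. -/
theorem mem_intrinsicInterior_of_openSegment {s : Set E} (hs : Convex ℝ s) {p r m : E}
    (hp : p ∈ intrinsicInterior ℝ s) (hr : r ∈ s) (hm : m ∈ openSegment ℝ p r) :
    m ∈ intrinsicInterior ℝ s := by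
  obtain ⟨t, t', ht, ht', htt', hteq⟩ := hm
  have ht1 : t' = 1 - t := by linarith
  subst ht1
  have ht2 : t < 1 := by linarith
  have hps : p ∈ s := intrinsicInterior_subset hp
  have hpA : p ∈ affineSpan ℝ s := subset_affineSpan ℝ s hps
  have hrA : r ∈ affineSpan ℝ s := subset_affineSpan ℝ s hr
  have hmA : m ∈ affineSpan ℝ s := by
    rw [← hteq]
    have h := AffineSubspace.smul_vsub_vadd_mem (affineSpan ℝ s) t hpA hrA hrA
    have he : t • (p -ᵥ r) +ᵥ r = t • p + (1 - t) • r := by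
      rw [vsub_eq_sub, vadd_eq_add]; module
    rwa [he] at h
  obtain ⟨U, hU, hpU, hUs⟩ := (mem_intrinsicInterior_iff' hpA).1 hp
  have hΦopen : IsOpen ((fun w : E => t • w + (1 - t) • r) '' U) := by
    have : (fun w : E => t • w + (1 - t) • r) '' U
        = (fun w : E => t⁻¹ • (w - (1 - t) • r)) ⁻¹' U := by
      ext w
      constructor
      · rintro ⟨u, hu, rfl⟩
        simpa [smul_smul, inv_mul_cancel₀ (ne_of_gt ht), smul_sub] using hu
      · intro hw
        refine ⟨t⁻¹ • (w - (1 - t) • r), hw, ?_⟩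
        match_scalars <;> field_simp <;> ring
    rw [this]
    exact hU.preimage (by fun_prop)
  refine (mem_intrinsicInterior_iff' hmA).2
    ⟨_, hΦopen, ⟨p, hpU, hteq⟩, ?_⟩
  rintro v ⟨⟨w, hwU, rfl⟩, hvA⟩
  have hwA : w ∈ affineSpan ℝ s := by
    have h := AffineSubspace.smul_vsub_vadd_mem (affineSpan ℝ s) t⁻¹ hvA hrA hrA
    have he : t⁻¹ • ((t • w + (1 - t) • r) -ᵥ r) +ᵥ r = w := by
      rw [vsub_eq_sub, vadd_eq_add]
      match_scalars <;> field_simp <;> ring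
    rwa [he] at h
  have hws : w ∈ s := hUs ⟨hwU, hwA⟩
  exact hs hws hr (le_of_lt ht) (by linarith) (by ring)

end General2


section General3
variable {E : Type*} [NormedAddCommGroup E] [NormedSpace ℝ E]

theorem mem_intrinsicInterior_mface [FiniteDimensional ℝ E] {P : Set E} (hP : Convex ℝ P)
    {m : E} (hm : m ∈ P) : m ∈ intrinsicInterior ℝ (mface P m) := by
  obtain ⟨p, hp⟩ := Set.Nonempty.intrinsicInterior (mface_convex hP m) ⟨m, mem_mface_self hm⟩
  have hpF : p ∈ mface P m := intrinsicInterior_subset hp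
  obtain ⟨hpP, z, hz, hseg⟩ := hpF
  have hzF : z ∈ mface P m := ⟨hz, p, hpP, openSegment_symm ℝ p z ▸ hseg⟩
  exact mem_intrinsicInterior_of_openSegment (mface_convex hP m) hp hzF hseg

end General3

theorem span_top_of_classes {d : ℕ} (S : Submodule ℝ (Fin d → ℝ))
    (h : ∀ c : Fin d → ZMod 3, ∃ v : Fin d → ℤ, ic v ∈ S ∧ ∀ i, ((v i : ZMod 3)) = c i) :
    S = ⊤ := by
  choose g hgS hgc using fun j : Fin d => h (fun i => if i = j then 1 else 0)
  set Mz : Matrix (Fin d) (Fin d) ℤ := Matrix.of (fun i j => g j i) with hMz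
  have hmod : (Int.castRingHom (ZMod 3)).mapMatrix Mz = 1 := by
    ext i j
    simp only [RingHom.mapMatrix_apply, Matrix.map_apply, Matrix.one_apply, hMz, Matrix.of_apply,
      Int.coe_castRingHom]
    by_cases hij : i = j <;> rw [hgc j i] <;> simp [hij]
  have hdet : Mz.det ≠ 0 := by
    intro h0
    have := (Int.castRingHom (ZMod 3)).map_det Mz
    rw [hmod, h0, Matrix.det_one, map_zero] at this
    exact one_ne_zero this.symm
  set Mr : Matrix (Fin d) (Fin d) ℝ := (Int.castRingHom ℝ).mapMatrix Mz with hMr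
  have hdetr : Mr.det ≠ 0 := by
    rw [hMr, ← RingHom.map_det]
    intro hh
    simp only [Int.coe_castRingHom, Int.cast_eq_zero] at hh
    exact hdet hh
  have hunit : IsUnit Mr := (Matrix.isUnit_iff_isUnit_det Mr).2 (isUnit_iff_ne_zero.2 hdetr)
  rw [eq_top_iff]
  intro y _
  have hy : y = Mr.mulVec (Mr⁻¹.mulVec y) := by
    rw [Matrix.mulVec_mulVec, Matrix.mul_nonsing_inv _ (isUnit_iff_ne_zero.2 hdetr),
      Matrix.one_mulVec]
  rw [hy]
  have hexp : ∀ x : Fin d → ℝ, Mr.mulVec x = ∑ j, x j • ic (g j) := by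
    intro x
    funext i
    rw [Matrix.mulVec, dotProduct, Finset.sum_apply]
    refine Finset.sum_congr rfl fun j _ => ?_
    simp [hMr, hMz, ic, mul_comm]
  rw [hexp]
  exact Submodule.sum_mem S fun j _ => Submodule.smul_mem S _ (hgS j)

def phi3 {d : ℕ} (v : Fin d → ℤ) : Fin d → ZMod 3 := fun i => (v i : ZMod 3)

theorem ic_zero {d : ℕ} : ic (0 : Fin d → ℤ) = 0 := by funext i; simp [ic]
theorem ic_neg {d : ℕ} (v : Fin d → ℤ) : ic (-v) = -ic v := by funext i; simp [ic]
theorem ic_inj {d : ℕ} : Function.Injective (ic (d := d)) := by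
  intro x y h
  funext i
  have := congrFun h i
  simp only [ic] at this
  exact_mod_cast this

variable {d : ℕ} {P : Set (Fin d → ℝ)}

theorem hPconv (hpoly : IsLatticePolytope P) : Convex ℝ P := by
  obtain ⟨V, rfl⟩ := hpoly; exact convex_convexHull ℝ _

theorem hPcomp (hpoly : IsLatticePolytope P) : IsCompact P := by
  obtain ⟨V, rfl⟩ := hpoly
  exact (V.finite_toSet.image ic).isCompact_convexHull ℝ

theorem interior_lattice (hint : relintLatticePts P = {0}) (v : Fin d → ℤ)
    (hv : ic v ∈ interior P) : v = 0 := by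
  have : v ∈ relintLatticePts P := interior_subset_intrinsicInterior hv
  rw [hint] at this; exact this

theorem zero_interior (hdim : affineSpan ℝ P = ⊤) (hint : relintLatticePts P = {0}) :
    (0 : Fin d → ℝ) ∈ interior P := by
  have h0 : (0 : Fin d → ℤ) ∈ relintLatticePts P := by rw [hint]; rfl
  have := intrinsicInterior_subset_interior_of_span_top hdim h0
  rwa [ic_zero] at this

theorem lattice_neg (hsym : P = -P) {v : Fin d → ℤ} (hv : v ∈ latticePts P) :
    -v ∈ latticePts P := by
  have : ic v ∈ -P := hsym ▸ hv
  have h2 : -ic v ∈ P := Set.mem_neg.1 this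
  show ic (-v) ∈ P
  rwa [ic_neg]

theorem dvd3_of_phi3_eq {x y : Fin d → ℤ} (hxy : phi3 x = phi3 y) (i : Fin d) :
    (3:ℤ) ∣ (x i - y i) := by
  have h1 : ((x i : ZMod 3)) = (y i : ZMod 3) := congrFun hxy i
  have h3 : x i ≡ y i [ZMOD (3:ℤ)] := by
    rwa [ZMod.intCast_eq_intCast_iff'] at h1
  exact (Int.ModEq.dvd h3.symm)

theorem inj3 (hpoly : IsLatticePolytope P) (hdim : affineSpan ℝ P = ⊤) (hsym : P = -P)
    (hint : relintLatticePts P = {0}) :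
    Set.InjOn (phi3 (d := d)) (latticePts P) := by
  intro x hx y hy hxy
  by_contra hne
  set w : Fin d → ℤ := fun i => (x i - y i) / 3 with hw
  have h3w : ∀ i, 3 * w i = x i - y i := fun i =>
    Int.mul_ediv_cancel' (dvd3_of_phi3_eq hxy i)
  have hwne : w ≠ 0 := by
    intro h0
    apply hne
    funext i
    have := h3w i
    rw [h0] at this
    simp at this
    linarith [this]
  set q : Fin d → ℝ := (1/2 : ℝ) • (ic x + (- ic y)) with hq
  have hqP : q ∈ P := by
    have := (hPconv hpoly) hx (lattice_neg hsym hy) (by norm_num : (0:ℝ) ≤ 1/2)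
      (by norm_num : (0:ℝ) ≤ 1/2) (by norm_num)
    rw [ic_neg] at this
    rw [hq]
    convert this using 1
    module
  have hicw : ic w = (2/3 : ℝ) • q := by
    funext i
    have := h3w i
    have : ((w i : ℝ)) * 3 = (x i : ℝ) - y i := by exact_mod_cast by linarith [h3w i]
    simp only [hq, ic, Pi.smul_apply, Pi.add_apply, Pi.neg_apply, smul_eq_mul]
    linarith
  have hwint : ic w ∈ interior P := by
    have hseg : ic w ∈ openSegment ℝ (0 : Fin d → ℝ) q :=
      ⟨1/3, 2/3, by norm_num, by norm_num, by norm_num, by rw [hicw]; module⟩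
    exact (hPconv hpoly).openSegment_interior_closure_subset_interior
      (zero_interior hdim hint) (subset_closure hqP) hseg
  exact hwne (interior_lattice hint w hwint)

theorem lattice_finite (hcard : (latticePts P).ncard = 3 ^ d) : (latticePts P).Finite := by
  by_contra h
  rw [Set.Infinite.ncard (fun hf => h hf)] at hcard
  exact (by positivity : (0:ℕ) < 3 ^ d).ne' hcard.symm

theorem surj3 (hinj : Set.InjOn (phi3 (d := d)) (latticePts P))
    (hcard : (latticePts P).ncard = 3 ^ d) (c : Fin d → ZMod 3) :
    ∃ v ∈ latticePts P, phi3 v = c := by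
  have hfin := lattice_finite hcard
  have himg : phi3 '' latticePts P = univ := by
    apply Set.eq_of_subset_of_ncard_le (subset_univ _) _ finite_univ
    rw [Set.ncard_image_of_injOn hinj, hcard, Set.ncard_univ, Nat.card_eq_fintype_card]
    simp [ZMod.card]
  have : c ∈ phi3 '' latticePts P := himg ▸ mem_univ c
  obtain ⟨v, hv, hvc⟩ := this
  exact ⟨v, hv, hvc⟩

theorem ic_add {d : ℕ} (v w : Fin d → ℤ) : ic (v + w) = ic v + ic w := by
  funext i; simp [ic]
theorem ic_nsmul {d : ℕ} (n : ℕ) (v : Fin d → ℤ) : ic ((n:ℤ) • v) = (n:ℝ) • ic v := by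
  funext i; simp [ic]

theorem climb {d : ℕ} {P : Set (Fin d → ℝ)}
    (hPc : Convex ℝ P) (hcomp : IsCompact P)
    (hneg : ∀ {v : Fin d → ℤ}, v ∈ latticePts P → -v ∈ latticePts P)
    (hsurj : ∀ c : Fin d → ZMod 3, ∃ v ∈ latticePts P, phi3 v = c)
    {x : Fin d → ℤ} (hx : x ∈ latticePts P) (hxne : x ≠ 0)
    (hsmall : Module.finrank ℝ (vectorSpan ℝ (mface P (ic x))) + 2 ≤ d) :
    ∃ m ∈ latticePts P, m ≠ 0 ∧
      Module.finrank ℝ (vectorSpan ℝ (mface P (ic x))) <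
        Module.finrank ℝ (vectorSpan ℝ (mface P (ic m))) := by
  have hicx : ic x ≠ 0 := fun h => hxne (ic_inj (h.trans ic_zero.symm))
  set W : Submodule ℝ (Fin d → ℝ) := vectorSpan ℝ (mface P (ic x)) with hW
  set S : Submodule ℝ (Fin d → ℝ) := Submodule.span ℝ {ic x} ⊔ W with hS
  have hSne : S ≠ ⊤ := by
    intro htop
    have hsum : Module.finrank ℝ S + Module.finrank ℝ (Submodule.span ℝ {ic x} ⊓ W : Submodule ℝ (Fin d → ℝ))
        = Module.finrank ℝ (Submodule.span ℝ {ic x}) + Module.finrank ℝ W := by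
      rw [hS]; exact Submodule.finrank_sup_add_finrank_inf_eq _ _
    rw [htop, finrank_top, Module.finrank_fin_fun, finrank_span_singleton hicx] at hsum
    omega
  -- find a lattice point outside S
  have hu : ∃ u ∈ latticePts P, ic u ∉ (S : Set (Fin d → ℝ)) := by
    by_contra h
    push_neg at h
    refine hSne (span_top_of_classes S fun c => ?_)
    obtain ⟨v, hv, hvc⟩ := hsurj c
    exact ⟨v, h v hv, fun i => by rw [← hvc]; rfl⟩
  obtain ⟨u, huP, huS⟩ := hu
  -- walk along direction x as long as possible
  have hray : ∃ n : ℕ, u + (n:ℤ) • x ∉ latticePts P := by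
    obtain ⟨R, hR⟩ := isBounded_iff_forall_norm_le.1 hcomp.isBounded
    have hxpos : 0 < ‖ic x‖ := norm_pos_iff.2 hicx
    obtain ⟨n, hn⟩ := exists_nat_gt ((R + ‖ic u‖) / ‖ic x‖)
    refine ⟨n, fun hmem => ?_⟩
    have hnorm : ‖ic (u + (n:ℤ) • x)‖ ≤ R := hR _ hmem
    rw [ic_add, ic_nsmul] at hnorm
    have h2 : (n:ℝ) * ‖ic x‖ ≤ ‖ic u + (n:ℝ) • ic x‖ + ‖ic u‖ := by
      have h3 := norm_sub_le (ic u + (n:ℝ) • ic x) (ic u)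
      simp only [add_sub_cancel_left] at h3
      rw [norm_smul] at h3
      simp only [Real.norm_natCast] at h3
      linarith
    rw [div_lt_iff₀ hxpos] at hn
    linarith
  obtain ⟨N, hNspec, hNmin⟩ : ∃ N : ℕ, (u + (N:ℤ) • x ∉ latticePts P) ∧
      ∀ k : ℕ, k < N → u + (k:ℤ) • x ∈ latticePts P := by
    classical
    exact ⟨Nat.find hray, Nat.find_spec hray, fun k hk => not_not.1 (Nat.find_min hray hk)⟩
  have hN1 : 1 ≤ N := by
    rcases Nat.eq_zero_or_pos N with h0 | h1
    · exfalso
      rw [h0] at hNspec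
      simp only [Nat.cast_zero, zero_smul, add_zero] at hNspec
      exact hNspec huP
    · exact h1
  set u' : Fin d → ℤ := u + ((N - 1 : ℕ):ℤ) • x with hu'
  have hu'P : u' ∈ latticePts P := hNmin (N-1) (by omega)
  have hxu' : x + u' ∉ latticePts P := by
    intro hmem
    apply hNspec
    convert hmem using 1
    rw [hu']
    have hc : ((N - 1 : ℕ):ℤ) = (N:ℤ) - 1 := by push_cast [Nat.cast_sub hN1]; ring
    rw [hc]
    funext i
    simp only [Pi.add_apply, Pi.smul_apply, smul_eq_mul]
    ring
  have hu'S : ic u' ∉ (S : Set (Fin d → ℝ)) := by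
    intro hmem
    apply huS
    have hxS : ic x ∈ S := by
      apply Submodule.mem_sup_left
      exact Submodule.mem_span_singleton_self _
    have heq : ic u' = ic u + (((N - 1 : ℕ)):ℝ) • ic x := by
      rw [hu']
      funext i
      simp only [ic, Pi.add_apply, Pi.smul_apply, smul_eq_mul]
      push_cast
      ring
    have h2 : ic u = ic u' - (((N - 1 : ℕ)):ℝ) • ic x := by rw [heq]; abel
    rw [h2]
    exact Submodule.sub_mem S hmem (Submodule.smul_mem S _ hxS)
  -- the representative of the class of -(x+u')
  obtain ⟨z, hzP, hzc⟩ := hsurj (phi3 (-(x + u')))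
  have hdvd : ∀ i, (3:ℤ) ∣ (x i + u' i + z i) := by
    intro i
    have := dvd3_of_phi3_eq hzc i
    simp only [Pi.neg_apply, Pi.add_apply] at this
    obtain ⟨c, hc⟩ := this
    exact ⟨c, by linarith⟩
  set m : Fin d → ℤ := fun i => (x i + u' i + z i) / 3 with hm
  have h3m : ∀ i, 3 * m i = x i + u' i + z i := fun i => Int.mul_ediv_cancel' (hdvd i)
  set q : Fin d → ℝ := (1/2 : ℝ) • (ic u' + ic z) with hq
  have hqP : q ∈ P := by
    have := hPc hu'P hzP (by norm_num : (0:ℝ) ≤ 1/2) (by norm_num : (0:ℝ) ≤ 1/2) (by norm_num)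
    rw [hq]; convert this using 1; module
  have hicm : ic m = (1/3 : ℝ) • ic x + (2/3 : ℝ) • q := by
    funext i
    have h3 : ((m i : ℝ)) * 3 = (x i : ℝ) + u' i + z i := by
      exact_mod_cast by linarith [h3m i]
    simp only [hq, ic, Pi.add_apply, Pi.smul_apply, smul_eq_mul]
    linarith
  have hmP : ic m ∈ P := by
    rw [hicm]
    exact hPc hx hqP (by norm_num) (by norm_num) (by norm_num)
  have hmne : m ≠ 0 := by
    intro h0
    apply hxu'
    have hz' : z = -(x + u') := by
      funext i
      have := h3m i
      rw [h0] at this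
      simp only [Pi.zero_apply, mul_zero] at this
      simp only [Pi.neg_apply, Pi.add_apply]
      linarith
    have := hneg hzP
    rwa [hz', neg_neg] at this
  -- x and u' belong to the face of m
  have hxF : ic x ∈ mface P (ic m) :=
    ⟨hx, q, hqP, ⟨1/3, 2/3, by norm_num, by norm_num, by norm_num, hicm.symm⟩⟩
  have hqF : q ∈ mface P (ic m) :=
    ⟨hqP, ic x, hx, ⟨2/3, 1/3, by norm_num, by norm_num, by norm_num, by
      rw [hicm]; abel⟩⟩
  have hu'F : ic u' ∈ mface P (ic m) := by
    have hseg : q ∈ openSegment ℝ (ic u') (ic z) :=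
      ⟨1/2, 1/2, by norm_num, by norm_num, by norm_num, by rw [hq]; module⟩
    exact (mface_isExtreme hPc (ic m)).2 hu'P hzP hqF hseg
  have hsub : mface P (ic x) ⊆ mface P (ic m) := by
    rintro y ⟨hyP, z', hz', hseg⟩
    exact (mface_isExtreme hPc (ic m)).2 hyP hz' hxF hseg
  refine ⟨m, hmP, hmne, ?_⟩
  have hlt : W < vectorSpan ℝ (mface P (ic m)) := by
    refine lt_of_le_of_ne (vectorSpan_mono ℝ hsub) ?_
    intro heq
    apply hu'S
    have hvs : ic u' - ic x ∈ vectorSpan ℝ (mface P (ic m)) := by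
      have := vsub_mem_vectorSpan ℝ hu'F hxF
      rwa [vsub_eq_sub] at this
    rw [← heq] at hvs
    have hxS : ic x ∈ S := Submodule.mem_sup_left (Submodule.mem_span_singleton_self _)
    have hWS : ic u' - ic x ∈ S := Submodule.mem_sup_right hvs
    have : ic u' = (ic u' - ic x) + ic x := by abel
    rw [this]
    exact Submodule.add_mem S hWS hxS
  exact Submodule.finrank_lt_finrank_of_lt hlt

/-- Let `P` be a `d`-dimensional (`d ≥ 2`) centrally-symmetric lattice polytope with
    `P°_ℤ = {0}` and `|P_ℤ| = 3^d`.  For every `1 ≤ k ≤ d−1` there is a proper face of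
    `P` of dimension at least `k` whose relative interior contains a lattice point; in
    particular some facet of `P` has a lattice point in its relative interior. -/
theorem exists_face_with_interior_lattice_point {d : ℕ} (hd : 2 ≤ d)
    (P : Set (Fin d → ℝ))
    (hpoly : IsLatticePolytope P) (hdim : affineSpan ℝ P = ⊤)
    (hsym : P = -P) (hint : relintLatticePts P = {0})
    (hcard : (latticePts P).ncard = 3 ^ d) :
    (∀ k : ℕ, 1 ≤ k → k ≤ d - 1 →
      ∃ F : Set (Fin d → ℝ), IsFaceOf P F ∧ F ≠ P ∧
        k ≤ Module.finrank ℝ (vectorSpan ℝ F) ∧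
        ∃ x : Fin d → ℤ, ic x ∈ intrinsicInterior ℝ F) ∧
    (∃ F : Set (Fin d → ℝ), IsFaceOf P F ∧
      Module.finrank ℝ (vectorSpan ℝ F) = d - 1 ∧
      ∃ x : Fin d → ℤ, ic x ∈ intrinsicInterior ℝ F) := by
  have hPc : Convex ℝ P := hPconv hpoly
  have hcomp : IsCompact P := hPcomp hpoly
  have hneg : ∀ {v : Fin d → ℤ}, v ∈ latticePts P → -v ∈ latticePts P :=
    fun hv => lattice_neg hsym hv
  have hinj := inj3 hpoly hdim hsym hint
  have hsurj := surj3 hinj hcard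
  -- a nonzero lattice point
  obtain ⟨x0, hx0P, hx0c⟩ := hsurj (fun _ => 1)
  have hx0ne : x0 ≠ 0 := by
    intro h0
    have := congrFun hx0c ⟨0, by omega⟩
    rw [h0] at this
    simp only [phi3, Pi.zero_apply, Int.cast_zero] at this
    exact zero_ne_one this
  -- main induction : faces of increasing dimension with a lattice point in their rel. interior
  have main : ∀ k : ℕ, k ≤ d - 1 → ∃ m ∈ latticePts P, m ≠ 0 ∧
      k ≤ Module.finrank ℝ (vectorSpan ℝ (mface P (ic m))) := by
    intro k
    induction k with
    | zero => exact fun _ => ⟨x0, hx0P, hx0ne, Nat.zero_le _⟩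
    | succ k ih =>
      intro hk
      obtain ⟨m, hmP, hmne, hmrk⟩ := ih (by omega)
      rcases le_or_gt (k + 1) (Module.finrank ℝ (vectorSpan ℝ (mface P (ic m)))) with h | h
      · exact ⟨m, hmP, hmne, h⟩
      · have hsm : Module.finrank ℝ (vectorSpan ℝ (mface P (ic m))) + 2 ≤ d := by omega
        obtain ⟨m', h1, h2, h3⟩ := climb hPc hcomp hneg hsurj hmP hmne hsm
        exact ⟨m', h1, h2, by omega⟩
  -- basic facts about the faces produced
  have hface : ∀ m : Fin d → ℤ, m ∈ latticePts P → m ≠ 0 →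
      IsFaceOf P (mface P (ic m)) ∧ mface P (ic m) ≠ P ∧
        ic m ∈ intrinsicInterior ℝ (mface P (ic m)) := by
    intro m hmP hmne
    have hii := mem_intrinsicInterior_mface hPc hmP
    refine ⟨⟨mface_isExtreme hPc _, mface_convex hPc _⟩, ?_, hii⟩
    intro hEq
    have h1 : ic m ∈ intrinsicInterior ℝ P := by rw [← hEq]; exact hii
    have h2 : m ∈ relintLatticePts P := h1
    rw [hint] at h2
    exact hmne h2
  have hrk_lt : ∀ m : Fin d → ℤ, m ∈ latticePts P → m ≠ 0 →
      Module.finrank ℝ (vectorSpan ℝ (mface P (ic m))) < d := by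
    intro m hmP hmne
    by_contra hge
    push_neg at hge
    have hle : Module.finrank ℝ (vectorSpan ℝ (mface P (ic m))) ≤ d := by
      have := Submodule.finrank_le (vectorSpan ℝ (mface P (ic m)))
      rwa [Module.finrank_fin_fun] at this
    have heq : Module.finrank ℝ (vectorSpan ℝ (mface P (ic m))) =
        Module.finrank ℝ (Fin d → ℝ) := by rw [Module.finrank_fin_fun]; omega
    have htop : vectorSpan ℝ (mface P (ic m)) = ⊤ := Submodule.eq_top_of_finrank_eq heq
    have hmF : ic m ∈ mface P (ic m) := mem_mface_self hmP
    have hspan : affineSpan ℝ (mface P (ic m)) = ⊤ := by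
      rw [← AffineSubspace.direction_eq_top_iff_of_nonempty
        ⟨ic m, subset_affineSpan ℝ _ hmF⟩]
      rw [direction_affineSpan]
      exact htop
    have hii := mem_intrinsicInterior_mface hPc hmP
    have hiint : ic m ∈ interior (mface P (ic m)) :=
      intrinsicInterior_subset_interior_of_span_top hspan hii
    have : ic m ∈ interior P := interior_mono (mface_subset P (ic m)) hiint
    exact hmne (interior_lattice hint m this)
  constructor
  · intro k hk1 hk2
    obtain ⟨m, hmP, hmne, hmrk⟩ := main k hk2
    obtain ⟨hf, hne, hii⟩ := hface m hmP hmne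
    exact ⟨mface P (ic m), hf, hne, hmrk, m, hii⟩
  · obtain ⟨m, hmP, hmne, hmrk⟩ := main (d - 1) le_rfl
    obtain ⟨hf, hne, hii⟩ := hface m hmP hmne
    refine ⟨mface P (ic m), hf, ?_, m, hii⟩
    have := hrk_lt m hmP hmne
    omega
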